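/- (Constant function as a quadratic form in harmonic polynomials.) Let n ≥ 1 and let p₁,…,p_m ∈ ℝ[x₁,x₂,x₃] be polynomials, each homogeneous of degree n with Δpⱼ = 0, such that every polynomial that is homogeneous of degree n and harmonic is an ℝ-linear combination of p₁,…,p_m. Then (x₁² + x₂² + x₃²)^n lies in the ℝ-linear span of the products {pᵢ·pⱼ : 1 ≤ i ≤ j ≤ m}. -/

import Mathlib

section ScalarPart
open Polynomial Finset

noncomputable def Sfun (n : ℕ) (p : Polynomial ℂ) : ℂ :=
  ∑ k ∈ Finset.range (2*n+1),
    (-1)^k * ((k.factorial : ℂ) * ((2*n - k).factorial : ℂ)) * p.coeff k * p.coeff (2*n - k)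

lemma inner_id (n j l : ℕ) (hj : j ≤ 2*n) (hl : l ≤ 2*n) (t : ℂ) :
    ∑ k ∈ Finset.range (2*n+1), (-1)^k * ((k.factorial : ℂ) * ((2*n-k).factorial : ℂ)) *
      ((j.choose k : ℂ) * t^(j-k)) * ((l.choose (2*n-k) : ℂ) * t^(l-(2*n-k)))
    = if j + l = 2*n then (-1)^j * ((j.factorial : ℂ) * (l.factorial : ℂ)) else 0 := by
  by_cases hjl : 2*n ≤ j + l
  · -- main case
    set M := j + l - 2*n with hM
    have hMle : M ≤ j := by omega
    -- restrict sum to Icc (2*n - l) j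
    have hsub : Finset.Icc (2*n - l) j ⊆ Finset.range (2*n+1) := by
      intro k hk; simp only [Finset.mem_Icc] at hk; simp only [Finset.mem_range]; omega
    have hzero : ∀ k ∈ Finset.range (2*n+1), k ∉ Finset.Icc (2*n - l) j →
        (-1:ℂ)^k * ((k.factorial : ℂ) * ((2*n-k).factorial : ℂ)) *
        ((j.choose k : ℂ) * t^(j-k)) * ((l.choose (2*n-k) : ℂ) * t^(l-(2*n-k))) = 0 := by
      intro k hk hk'
      simp only [Finset.mem_Icc, not_and, not_le] at hk'
      by_cases h1 : k ≤ j
      · have h2 : 2*n - l ≤ k → False := fun h => absurd (hk' h) (not_lt.2 h1)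
        have h3 : k < 2*n - l := by omega
        have : l < 2*n - k := by omega
        rw [Nat.choose_eq_zero_of_lt this]; ring
      · rw [Nat.choose_eq_zero_of_lt (by omega : j < k)]; ring
    rw [← Finset.sum_subset hsub hzero]
    -- rewrite each term
    have hterm : ∀ k ∈ Finset.Icc (2*n - l) j,
        (-1:ℂ)^k * ((k.factorial : ℂ) * ((2*n-k).factorial : ℂ)) *
        ((j.choose k : ℂ) * t^(j-k)) * ((l.choose (2*n-k) : ℂ) * t^(l-(2*n-k)))
        = ((-1:ℂ)^k * ((M.choose (j-k) : ℂ))) *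
          ((j.factorial : ℂ) * (l.factorial : ℂ) * t^M / (M.factorial : ℂ)) := by
      intro k hk
      simp only [Finset.mem_Icc] at hk
      obtain ⟨hk1, hk2⟩ := hk
      have e1 : (j.choose k : ℂ) * (k.factorial : ℂ) * ((j-k).factorial : ℂ) = (j.factorial : ℂ) := by
        exact_mod_cast congrArg (Nat.cast : ℕ → ℂ) (Nat.choose_mul_factorial_mul_factorial hk2)
      have h2nk : 2*n - k ≤ l := by omega
      have e2 : (l.choose (2*n-k) : ℂ) * ((2*n-k).factorial : ℂ) * ((l-(2*n-k)).factorial : ℂ)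
          = (l.factorial : ℂ) := by
        exact_mod_cast congrArg (Nat.cast : ℕ → ℂ) (Nat.choose_mul_factorial_mul_factorial h2nk)
      have hjkM : j - k ≤ M := by omega
      have e3 : (M.choose (j-k) : ℂ) * ((j-k).factorial : ℂ) * ((M-(j-k)).factorial : ℂ)
          = (M.factorial : ℂ) := by
        exact_mod_cast congrArg (Nat.cast : ℕ → ℂ) (Nat.choose_mul_factorial_mul_factorial hjkM)
      have e4 : ((l - (2*n - k)).factorial : ℂ) = ((M - (j - k)).factorial : ℂ) := by
        rw [show l - (2*n - k) = M - (j - k) from by omega]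
      have e5 : t^(j-k) * t^(l-(2*n-k)) = t^M := by
        rw [← pow_add]; congr 1; omega
      have f3 : ((M).factorial : ℂ) ≠ 0 := Nat.cast_ne_zero.2 (Nat.factorial_ne_zero _)
      have key : ((-1:ℂ)^k * ((k.factorial : ℂ) * ((2*n-k).factorial : ℂ)) *
          ((j.choose k : ℂ) * t^(j-k)) * ((l.choose (2*n-k) : ℂ) * t^(l-(2*n-k)))) * (M.factorial : ℂ)
          = (((-1:ℂ)^k * (M.choose (j-k) : ℂ)) * ((j.factorial : ℂ) * (l.factorial : ℂ) * t^M)) := by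
        rw [← e1, ← e2, ← e3, ← e5, e4]; ring
      calc (-1:ℂ)^k * ((k.factorial : ℂ) * ((2*n-k).factorial : ℂ)) *
          ((j.choose k : ℂ) * t^(j-k)) * ((l.choose (2*n-k) : ℂ) * t^(l-(2*n-k)))
          = ((-1:ℂ)^k * ((k.factorial : ℂ) * ((2*n-k).factorial : ℂ)) *
          ((j.choose k : ℂ) * t^(j-k)) * ((l.choose (2*n-k) : ℂ) * t^(l-(2*n-k)))) * (M.factorial : ℂ) / (M.factorial : ℂ) := by
            field_simp
        _ = ((-1:ℂ)^k * ((M.choose (j-k) : ℂ))) *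
          ((j.factorial : ℂ) * (l.factorial : ℂ) * t^M / (M.factorial : ℂ)) := by rw [key]; ring
    rw [Finset.sum_congr rfl hterm, ← Finset.sum_mul]
    -- reindex
    have hre : ∑ k ∈ Finset.Icc (2*n - l) j, ((-1:ℂ)^k * ((M.choose (j-k) : ℂ)))
        = (-1)^j * ∑ r ∈ Finset.range (M+1), (-1:ℂ)^r * (M.choose r : ℂ) := by
      rw [Finset.mul_sum]
      refine Finset.sum_nbij' (fun k => j - k) (fun r => j - r) ?_ ?_ ?_ ?_ ?_
      · intro k hk; simp only [Finset.mem_Icc] at hk; simp only [Finset.mem_range]; omega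
      · intro r hr; simp only [Finset.mem_range] at hr; simp only [Finset.mem_Icc]; omega
      · intro k hk; simp only [Finset.mem_Icc] at hk; show j - (j - k) = k; omega
      · intro r hr; simp only [Finset.mem_range] at hr; show j - (j - r) = r; omega
      · intro k hk
        simp only [Finset.mem_Icc] at hk
        have hsgn : (-1:ℂ)^k = (-1)^j * (-1)^(j-k) := by
          have h1 : (-1:ℂ)^(j-k) * (-1:ℂ)^k = (-1)^j := by
            rw [← pow_add]; congr 1; omega
          have h2 : (-1:ℂ)^(j-k) * (-1:ℂ)^(j-k) = 1 := by
            rw [← pow_add, ← two_mul, pow_mul]; norm_num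
          calc (-1:ℂ)^k = ((-1:ℂ)^(j-k) * (-1:ℂ)^(j-k)) * (-1)^k := by rw [h2, one_mul]
            _ = (-1:ℂ)^(j-k) * ((-1:ℂ)^(j-k) * (-1)^k) := by ring
            _ = (-1)^j * (-1)^(j-k) := by rw [h1]; ring
        rw [hsgn]; ring
    rw [hre]
    have halt : ∑ r ∈ Finset.range (M+1), (-1:ℂ)^r * (M.choose r : ℂ)
        = if M = 0 then 1 else 0 := by
      have := Int.alternating_sum_range_choose (n := M)
      have := congrArg (Int.cast : ℤ → ℂ) this
      push_cast at this
      rw [this]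
    rw [halt]
    by_cases hM0 : M = 0
    · rw [if_pos hM0, if_pos (by omega)]
      simp [hM0]
    · rw [if_neg hM0, if_neg (by omega)]
      ring
  · -- degenerate case
    rw [if_neg (by omega)]
    apply Finset.sum_eq_zero
    intro k hk
    by_cases h1 : k ≤ j
    · have : l < 2*n - k := by omega
      rw [Nat.choose_eq_zero_of_lt this]; ring
    · rw [Nat.choose_eq_zero_of_lt (by omega : j < k)]; ring

lemma coeff_comp_add (n : ℕ) (p : Polynomial ℂ) (hp : p.natDegree ≤ 2*n) (t : ℂ) (k : ℕ) :
    (p.comp (X + C t)).coeff k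
      = ∑ j ∈ Finset.range (2*n+1), (j.choose k : ℂ) * t^(j-k) * p.coeff j := by
  rw [comp_eq_sum_left, Polynomial.sum_def, finset_sum_coeff]
  rw [Finset.sum_subset (Polynomial.supp_subset_range (lt_of_le_of_lt hp (Nat.lt_succ_self _)))]
  · apply Finset.sum_congr rfl
    intro j _
    rw [coeff_C_mul, coeff_X_add_C_pow]
    ring
  · intro j _ hj
    rw [Polynomial.notMem_support_iff.1 hj]
    simp

lemma key_taylor (n : ℕ) (p : Polynomial ℂ) (hp : p.natDegree ≤ 2*n) (t : ℂ) :
    Sfun n (p.comp (X + C t)) = Sfun n p := by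
  unfold Sfun
  calc ∑ k ∈ Finset.range (2*n+1),
      (-1:ℂ)^k * ((k.factorial : ℂ) * ((2*n - k).factorial : ℂ)) *
        (p.comp (X + C t)).coeff k * (p.comp (X + C t)).coeff (2*n-k)
      = ∑ k ∈ Finset.range (2*n+1), ∑ j ∈ Finset.range (2*n+1), ∑ l ∈ Finset.range (2*n+1),
          (-1:ℂ)^k * ((k.factorial : ℂ) * ((2*n-k).factorial : ℂ)) *
          ((j.choose k : ℂ) * t^(j-k)) * ((l.choose (2*n-k) : ℂ) * t^(l-(2*n-k)))
          * (p.coeff j * p.coeff l) := by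
        apply Finset.sum_congr rfl
        intro k _
        rw [coeff_comp_add n p hp t k, coeff_comp_add n p hp t (2*n-k)]
        simp only [Finset.mul_sum, Finset.sum_mul]
        rw [Finset.sum_comm]
        apply Finset.sum_congr rfl
        intro j _
        apply Finset.sum_congr rfl
        intro l _
        ring
    _ = ∑ j ∈ Finset.range (2*n+1), ∑ l ∈ Finset.range (2*n+1),
          (∑ k ∈ Finset.range (2*n+1),
          (-1:ℂ)^k * ((k.factorial : ℂ) * ((2*n-k).factorial : ℂ)) *
          ((j.choose k : ℂ) * t^(j-k)) * ((l.choose (2*n-k) : ℂ) * t^(l-(2*n-k))))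
          * (p.coeff j * p.coeff l) := by
        rw [Finset.sum_comm]
        apply Finset.sum_congr rfl
        intro j _
        rw [Finset.sum_comm]
        apply Finset.sum_congr rfl
        intro l _
        rw [Finset.sum_mul]
    _ = ∑ j ∈ Finset.range (2*n+1), ∑ l ∈ Finset.range (2*n+1),
          (if j + l = 2*n then (-1:ℂ)^j * ((j.factorial : ℂ) * (l.factorial : ℂ)) else 0)
          * (p.coeff j * p.coeff l) := by
        apply Finset.sum_congr rfl; intro j hj
        apply Finset.sum_congr rfl; intro l hl
        rw [inner_id n j l (by simpa using Nat.lt_succ_iff.1 (Finset.mem_range.1 hj))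
          (by simpa using Nat.lt_succ_iff.1 (Finset.mem_range.1 hl)) t]
    _ = ∑ k ∈ Finset.range (2*n+1),
        (-1:ℂ)^k * ((k.factorial : ℂ) * ((2*n - k).factorial : ℂ)) * p.coeff k * p.coeff (2*n-k) := by
        apply Finset.sum_congr rfl
        intro j hj
        rw [Finset.sum_eq_single_of_mem (2*n-j)
          (Finset.mem_range.2 (by have := Finset.mem_range.1 hj; omega))]
        · rw [if_pos (by have := Finset.mem_range.1 hj; omega)]
          ring
        · intro l _ hl
          rw [if_neg (by have := Finset.mem_range.1 hj; omega), zero_mul]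

lemma key_reflect (n : ℕ) (p : Polynomial ℂ) :
    Sfun n (p.reflect (2*n)) = Sfun n p := by
  unfold Sfun
  rw [← Finset.sum_range_reflect]
  apply Finset.sum_congr rfl
  intro k hk
  have hk' : k ≤ 2*n := by have := Finset.mem_range.1 hk; omega
  rw [coeff_reflect, coeff_reflect]
  rw [show 2*n + 1 - 1 - k = 2*n - k from by omega]
  rw [revAt_le (by omega : 2*n - k ≤ 2*n), revAt_le (by omega : 2*n - (2*n-k) ≤ 2*n)]
  rw [show 2*n - (2*n - k) = k from by omega]
  have h1 : (-1:ℂ)^(2*n-k) * (-1)^k = 1 := by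
    rw [← pow_add, show 2*n-k+k = 2*n from by omega, pow_mul]; norm_num
  have h2 : (-1:ℂ)^k * (-1)^k = 1 := by
    rw [← pow_add, ← two_mul, pow_mul]; norm_num
  have hsgn : (-1:ℂ)^(2*n-k) = (-1)^k := by
    calc (-1:ℂ)^(2*n-k) = (-1:ℂ)^(2*n-k) * ((-1:ℂ)^k * (-1)^k) := by rw [h2, mul_one]
      _ = ((-1:ℂ)^(2*n-k) * (-1)^k) * (-1)^k := by ring
      _ = (-1)^k := by rw [h1, one_mul]
  rw [hsgn]
  ring

lemma key0 (n : ℕ) (b : ℂ) : Sfun n ((C b * X)^n) = (-1)^n * ((n.factorial : ℂ))^2 * b^(2*n) := by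
  unfold Sfun
  have hco : ∀ k, ((C b * X)^n).coeff k = if k = n then b^n else 0 := by
    intro k
    rw [mul_pow, ← C_pow, coeff_C_mul, coeff_X_pow]
    split <;> simp
  rw [Finset.sum_eq_single_of_mem n (Finset.mem_range.2 (by omega))]
  · rw [hco, hco, show 2*n - n = n from by omega, if_pos rfl]
    rw [show 2*n = n + n from by omega, pow_add]
    ring
  · intro k _ hk
    rw [hco k, if_neg hk]
    ring

-- quadratics: notation
noncomputable def quad (a b c : ℂ) : Polynomial ℂ := C a + C b * X + C c * X^2

lemma quad_natDegree_le (a b c : ℂ) : (quad a b c).natDegree ≤ 2 := by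
  unfold quad
  compute_degree

lemma quadn_natDegree_le (n : ℕ) (a b c : ℂ) : ((quad a b c)^n).natDegree ≤ 2*n := by
  calc ((quad a b c)^n).natDegree ≤ n * (quad a b c).natDegree := natDegree_pow_le
    _ ≤ n * 2 := Nat.mul_le_mul_left n (quad_natDegree_le a b c)
    _ = 2*n := by ring

lemma reflect_pow_quad (q : Polynomial ℂ) (hq : q.natDegree ≤ 2) (m : ℕ) :
    (q^m).reflect (2*m) = (q.reflect 2)^m := by
  induction m with
  | zero => simp [reflect_C]
  | succ m ih =>
    rw [pow_succ, show 2*(m+1) = 2*m + 2 from by ring]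
    rw [reflect_mul (q^m) q (le_trans natDegree_pow_le (by
      calc m * q.natDegree ≤ m * 2 := Nat.mul_le_mul_left m hq
        _ = 2*m := by ring)) hq]
    rw [ih, pow_succ]

-- degenerate: only one nonzero coefficient away from pairing
lemma keyC (n : ℕ) (hn : 1 ≤ n) (a : ℂ) : Sfun n ((C a)^n) = 0 := by
  unfold Sfun
  apply Finset.sum_eq_zero
  intro k hk
  rw [← C_pow]
  by_cases h : k = 0
  · subst h
    rw [coeff_C (n := 2*n - 0)]
    rw [if_neg (by omega)]
    ring
  · rw [coeff_C, if_neg h]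
    ring

lemma keyX2 (n : ℕ) (hn : 1 ≤ n) (c : ℂ) : Sfun n ((C c * X^2)^n) = 0 := by
  unfold Sfun
  apply Finset.sum_eq_zero
  intro k hk
  have hco : ∀ j, ((C c * X^2)^n).coeff j = if j = 2*n then c^n else 0 := by
    intro j
    rw [mul_pow, ← C_pow, ← pow_mul, coeff_C_mul, coeff_X_pow, mul_comm 2 n]
    split <;> simp
  by_cases h : k = 2*n
  · rw [hco (2*n - k), if_neg (by omega)]
    ring
  · rw [hco k, if_neg h]
    ring

lemma key2 (n : ℕ) (hn : 1 ≤ n) (s c : ℂ) :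
    Sfun n ((C s * X + C c * X^2)^n) = (-1)^n * ((n.factorial : ℂ))^2 * s^(2*n) := by
  by_cases hs : s = 0
  · subst hs
    simp only [map_zero, zero_mul, zero_add]
    rw [keyX2 n hn c]
    rw [zero_pow (by omega : 2*n ≠ 0)]
    ring
  · have hq : C s * X + C c * X^2 = quad 0 s c := by unfold quad; simp
    have hrefl : (quad 0 s c).reflect 2 = quad c s 0 := by
      unfold quad
      rw [show (C (0:ℂ) + C s * X + C c * X^2) = C s * X^1 + C c * X^2 from by simp]
      rw [reflect_add, reflect_C_mul_X_pow, reflect_C_mul_X_pow]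
      rw [revAt_le (by omega : 1 ≤ 2), revAt_le (le_refl 2)]
      norm_num
      ring
    have hreflpow : ((quad 0 s c)^n).reflect (2*n) = (quad c s 0)^n := by
      rw [reflect_pow_quad _ (quad_natDegree_le 0 s c) n, hrefl]
    have hsc : s * (-(c/s)) = -c := by
      field_simp
    have hcomp : (quad c s 0).comp (X + C (-(c/s))) = C s * X := by
      unfold quad
      calc (C c + C s * X + C 0 * X^2).comp (X + C (-(c/s)))
          = C c + C s * (X + C (-(c/s))) := by
            simp [add_comp, mul_comp, C_comp, X_comp, pow_comp]
        _ = C c + C s * X + C (s * (-(c/s))) := by rw [C_mul]; ring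
        _ = C s * X + (C c + C (-c)) := by rw [hsc]; ring
        _ = C s * X := by rw [← C_add]; simp
    calc Sfun n ((C s * X + C c * X^2)^n)
        = Sfun n (((quad 0 s c)^n).reflect (2*n)) := by rw [hq, ← key_reflect n]
      _ = Sfun n ((quad c s 0)^n) := by rw [hreflpow]
      _ = Sfun n (((quad c s 0)^n).comp (X + C (-(c/s)))) := by
          rw [key_taylor n _ (quadn_natDegree_le n c s 0) _]
      _ = Sfun n ((C s * X)^n) := by rw [pow_comp, hcomp]
      _ = _ := key0 n s

lemma scalar_identity (n : ℕ) (hn : 1 ≤ n) (a b c : ℂ) :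
    Sfun n ((quad a b c)^n) = (-1)^n * ((n.factorial : ℂ))^2 * (b^2 - 4*a*c)^n := by
  by_cases hc : c = 0
  · subst hc
    by_cases hb : b = 0
    · subst hb
      rw [show quad a 0 0 = C a from by unfold quad; simp]
      rw [keyC n hn a]
      rw [show (0:ℂ)^2 - 4*a*0 = 0 from by ring, zero_pow (by omega : n ≠ 0)]
      ring
    · have hab : b * (-(a/b)) = -a := by field_simp
      have hcomp : (quad a b 0).comp (X + C (-(a/b))) = C b * X := by
        unfold quad
        calc (C a + C b * X + C 0 * X^2).comp (X + C (-(a/b)))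
            = C a + C b * (X + C (-(a/b))) := by
              simp [add_comp, mul_comp, C_comp, X_comp, pow_comp]
          _ = C a + C b * X + C (b * (-(a/b))) := by rw [C_mul]; ring
          _ = C b * X + (C a + C (-a)) := by rw [hab]; ring
          _ = C b * X := by rw [← C_add]; simp
      calc Sfun n ((quad a b 0)^n)
          = Sfun n (((quad a b 0)^n).comp (X + C (-(a/b)))) :=
            (key_taylor n _ (quadn_natDegree_le n a b 0) _).symm
        _ = Sfun n ((C b * X)^n) := by rw [pow_comp, hcomp]
        _ = (-1)^n * ((n.factorial : ℂ))^2 * b^(2*n) := key0 n b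
        _ = _ := by
            rw [show b^2 - 4*a*0 = b^2 from by ring, show b^(2*n) = (b^2)^n from by
              rw [← pow_mul]]
  · obtain ⟨s, hs⟩ := IsAlgClosed.exists_pow_nat_eq (b^2 - 4*a*c) (n := 2) two_pos
    set α := (-b + s)/(2*c) with hα
    have hroot : a + b*α + c*α^2 = 0 := by
      have hαe : 2*c*α = -b + s := by rw [hα]; field_simp
      have h4 : 4*c*(a + b*α + c*α^2) = 0 := by
        linear_combination (2*b + 2*c*α + (-b+s)) * hαe + hs
      rcases mul_eq_zero.1 h4 with h | h
      · exfalso; apply hc; linear_combination h/4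
      · exact h
    have hb2 : b + 2*c*α = s := by
      rw [hα]
      field_simp
      ring
    have hcomp : (quad a b c).comp (X + C α) = quad 0 s c := by
      unfold quad
      calc (C a + C b * X + C c * X^2).comp (X + C α)
          = C a + C b * (X + C α) + C c * (X + C α)^2 := by
            simp only [add_comp, mul_comp, C_comp, X_comp, pow_comp]
        _ = C (a + b*α + c*α^2) + C (b + 2*c*α) * X + C c * X^2 := by
            simp only [C_add, C_mul, C_pow, map_ofNat]
            ring
        _ = C 0 + C s * X + C c * X^2 := by rw [hroot, hb2]
    calc Sfun n ((quad a b c)^n)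
        = Sfun n (((quad a b c)^n).comp (X + C α)) :=
          (key_taylor n _ (quadn_natDegree_le n a b c) _).symm
      _ = Sfun n ((quad 0 s c)^n) := by rw [pow_comp, hcomp]
      _ = Sfun n ((C s * X + C c * X^2)^n) := by
          rw [show quad 0 s c = C s * X + C c * X^2 from by unfold quad; simp]
      _ = (-1)^n * ((n.factorial : ℂ))^2 * s^(2*n) := key2 n hn s c
      _ = _ := by rw [show s^(2*n) = (s^2)^n from by rw [← pow_mul], hs]


end ScalarPart

open MvPolynomial

/-- The Laplace operator on `ℝ[x₁,x₂,x₃]`. -/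
noncomputable def lap (p : MvPolynomial (Fin 3) ℝ) : MvPolynomial (Fin 3) ℝ :=
  pderiv 0 (pderiv 0 p) + pderiv 1 (pderiv 1 p) + pderiv 2 (pderiv 2 p)

open Finset

abbrev R3C := MvPolynomial (Fin 3) ℂ
abbrev R3R := MvPolynomial (Fin 3) ℝ

noncomputable def lapC (f : R3C) : R3C :=
  pderiv 0 (pderiv 0 f) + pderiv 1 (pderiv 1 f) + pderiv 2 (pderiv 2 f)

noncomputable def uu : R3C := X 0 + MvPolynomial.C Complex.I * X 1
noncomputable def vv : R3C := X 0 - MvPolynomial.C Complex.I * X 1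

noncomputable def Qpol : Polynomial R3C :=
  Polynomial.C uu + Polynomial.C ((2 : R3C) * X 2) * Polynomial.X
    + Polynomial.C (-vv) * Polynomial.X^2

noncomputable def Fk (n k : ℕ) : R3C := (Qpol^n).coeff k

lemma Qpol_natDegree_le : Qpol.natDegree ≤ 2 := by
  unfold Qpol; compute_degree

lemma Qpoln_natDegree_lt (n : ℕ) : (Qpol^n).natDegree < 2*n+1 := by
  have : (Qpol^n).natDegree ≤ n * Qpol.natDegree := Polynomial.natDegree_pow_le
  have h2 := Qpol_natDegree_le
  have : (Qpol^n).natDegree ≤ n * 2 := le_trans this (Nat.mul_le_mul_left n h2)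
  omega

-- evaluation of Qpol at a constant
noncomputable def linform (t : ℂ) : R3C :=
  MvPolynomial.C (1 - t^2) * X 0 + MvPolynomial.C (Complex.I*(1+t^2)) * X 1
    + MvPolynomial.C (2*t) * X 2

lemma Qpol_eval (t : ℂ) : Qpol.eval (MvPolynomial.C t) = linform t := by
  unfold Qpol linform uu vv
  simp only [Polynomial.eval_add, Polynomial.eval_mul, Polynomial.eval_C, Polynomial.eval_X,
    Polynomial.eval_pow]
  simp only [MvPolynomial.C_sub, MvPolynomial.C_add, MvPolynomial.C_mul, MvPolynomial.C_pow, MvPolynomial.C_1, map_ofNat]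
  ring

-- the master identity over R3C
lemma master (n : ℕ) (hn : 1 ≤ n) :
    ∑ k ∈ Finset.range (2*n+1),
      MvPolynomial.C ((-1:ℂ)^k * ((k.factorial : ℂ) * ((2*n - k).factorial : ℂ)))
        * (Fk n k * Fk n (2*n - k))
    = MvPolynomial.C ((-1:ℂ)^n * ((n.factorial : ℂ))^2 * 4^n)
        * (X 0^2 + X 1^2 + X 2^2)^n := by
  apply MvPolynomial.funext
  intro x
  have hmapQ : Qpol.map (MvPolynomial.eval x) =
      quad (x 0 + Complex.I * x 1) (2 * x 2) (-(x 0 - Complex.I * x 1)) := by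
    unfold Qpol quad uu vv
    simp only [Polynomial.map_add, Polynomial.map_mul, Polynomial.map_pow, Polynomial.map_C,
      Polynomial.map_X, Polynomial.map_sub, Polynomial.map_neg, Polynomial.map_ofNat,
      map_add, map_sub, map_mul, map_neg, MvPolynomial.eval_C,
      MvPolynomial.eval_X, map_ofNat]
  have hevF : ∀ k, MvPolynomial.eval x (Fk n k)
      = ((quad (x 0 + Complex.I * x 1) (2 * x 2) (-(x 0 - Complex.I * x 1)))^n).coeff k := by
    intro k
    unfold Fk
    rw [← Polynomial.coeff_map, Polynomial.map_pow, hmapQ]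
  rw [map_sum]
  have hL : ∀ k ∈ Finset.range (2*n+1),
      MvPolynomial.eval x (MvPolynomial.C ((-1:ℂ)^k * ((k.factorial : ℂ) * ((2*n - k).factorial : ℂ)))
        * (Fk n k * Fk n (2*n - k)))
      = (-1:ℂ)^k * ((k.factorial : ℂ) * ((2*n - k).factorial : ℂ))
        * ((quad (x 0 + Complex.I * x 1) (2 * x 2) (-(x 0 - Complex.I * x 1)))^n).coeff k
        * ((quad (x 0 + Complex.I * x 1) (2 * x 2) (-(x 0 - Complex.I * x 1)))^n).coeff (2*n-k) := by
    intro k _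
    simp only [map_mul, MvPolynomial.eval_C, hevF]
    ring
  rw [Finset.sum_congr rfl hL]
  have := scalar_identity n hn (x 0 + Complex.I * x 1) (2 * x 2) (-(x 0 - Complex.I * x 1))
  unfold Sfun at this
  rw [this]
  have hdisc : (2 * x 2)^2 - 4*(x 0 + Complex.I * x 1)*(-(x 0 - Complex.I * x 1))
      = 4 * (x 0^2 + x 1^2 + x 2^2) := by
    linear_combination (-4 * (x 1)^2) * Complex.I_sq
  rw [hdisc]
  rw [map_mul, MvPolynomial.eval_C, map_pow, map_add, map_add, map_pow, map_pow, map_pow,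
    MvPolynomial.eval_X, MvPolynomial.eval_X, MvPolynomial.eval_X]
  rw [mul_pow]
  ring

-- the Laplacian of a power of an isotropic linear form vanishes
lemma lap_pow_linear (a : Fin 3 → ℂ) (h : a 0^2 + a 1^2 + a 2^2 = 0) (n : ℕ) :
    lapC ((MvPolynomial.C (a 0) * X 0 + MvPolynomial.C (a 1) * X 1
      + MvPolynomial.C (a 2) * X 2)^n) = 0 := by
  set ℓ : R3C := MvPolynomial.C (a 0) * X 0 + MvPolynomial.C (a 1) * X 1
      + MvPolynomial.C (a 2) * X 2 with hℓ
  have hd : ∀ i : Fin 3, pderiv i ℓ = MvPolynomial.C (a i) := by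
    intro i
    fin_cases i <;>
      simp [hℓ, pderiv_X, pderiv_C_mul]
  have hpow : ∀ (m : ℕ) (i : Fin 3), pderiv i (ℓ^m) = m • (ℓ^(m-1) * MvPolynomial.C (a i)) := by
    intro m i
    rw [Derivation.leibniz_pow, hd i, smul_eq_mul]
  have h2 : ∀ i : Fin 3, pderiv i (pderiv i (ℓ^n))
      = (n*(n-1)) • (ℓ^(n-1-1) * (MvPolynomial.C (a i) * MvPolynomial.C (a i))) := by
    intro i
    rw [hpow n i, map_nsmul, pderiv_mul, hpow (n-1) i, pderiv_C, mul_zero, add_zero,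
      smul_mul_assoc, smul_smul, mul_assoc]
  unfold lapC
  rw [h2 0, h2 1, h2 2]
  have hC : (MvPolynomial.C (a 0) * MvPolynomial.C (a 0) + MvPolynomial.C (a 1) * MvPolynomial.C (a 1)
      + MvPolynomial.C (a 2) * MvPolynomial.C (a 2) : R3C) = 0 := by
    rw [← MvPolynomial.C_mul, ← MvPolynomial.C_mul, ← MvPolynomial.C_mul,
      ← MvPolynomial.C_add, ← MvPolynomial.C_add]
    rw [show a 0 * a 0 + a 1 * a 1 + a 2 * a 2 = a 0^2 + a 1^2 + a 2^2 from by ring, h]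
    exact MvPolynomial.C_0
  rw [← smul_add, ← smul_add, ← mul_add, ← mul_add, hC, mul_zero, smul_zero]

lemma linform_coeffs (t : ℂ) : (1 - t^2)^2 + (Complex.I*(1+t^2))^2 + (2*t)^2 = 0 := by
  linear_combination ((1+t^2)^2) * Complex.I_sq

lemma lap_linform_pow (t : ℂ) (n : ℕ) : lapC ((linform t)^n) = 0 := by
  have := lap_pow_linear (fun i => if i = 0 then 1 - t^2 else if i = 1 then Complex.I*(1+t^2) else 2*t)
    (by simp; linear_combination ((1+t^2)^2) * Complex.I_sq) n
  simpa [linform] using this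

lemma linform_hom (t : ℂ) (n : ℕ) : ((linform t)^n).IsHomogeneous n := by
  have h1 : (linform t).IsHomogeneous 1 := by
    unfold linform
    apply MvPolynomial.IsHomogeneous.add
    apply MvPolynomial.IsHomogeneous.add
    all_goals
      exact (zero_add 1) ▸ ((isHomogeneous_C _ _).mul (isHomogeneous_X _ _))
  have := h1.pow n
  simpa using this

-- the key span lemma
lemma Fk_mem_span (n : ℕ) (k : ℕ) (hk : k ≤ 2*n) :
    Fk n k ∈ Submodule.span ℂ {g : R3C | ∃ t : ℂ, g = (linform t)^n} := by
  classical
  set d := 2*n+1 with hd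
  set v : Fin d → ℂ := fun j => ((j : ℕ) : ℂ) with hv
  set V := Matrix.vandermonde v with hV
  have hdet : V.det ≠ 0 := by
    rw [Matrix.det_vandermonde_ne_zero_iff]
    intro i j hij
    have : ((i : ℕ) : ℂ) = ((j : ℕ) : ℂ) := hij
    exact Fin.ext (Nat.cast_injective this)
  have hWV : V⁻¹ * V = 1 := Matrix.nonsing_inv_mul V (Ne.isUnit hdet)
  set Fv : Fin d → R3C := fun k => Fk n (k : ℕ) with hFv
  have heq : ∀ j : Fin d, ∑ l : Fin d, V j l • Fv l = (linform (v j))^n := by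
    intro j
    have := Polynomial.eval_eq_sum_range' (Qpoln_natDegree_lt n) (MvPolynomial.C (v j))
    rw [Polynomial.eval_pow, Qpol_eval] at this
    calc ∑ l : Fin d, V j l • Fv l
        = ∑ l : Fin d, (fun m => (v j)^m • Fk n m) (l : ℕ) := by
          apply Finset.sum_congr rfl
          intro l _
          rw [hV, Matrix.vandermonde_apply, hFv]
      _ = ∑ m ∈ Finset.range d, (v j)^m • Fk n m :=
          Fin.sum_univ_eq_sum_range (fun m => (v j)^m • Fk n m) d
      _ = ∑ m ∈ Finset.range (2*n+1), (Qpol^n).coeff m * (MvPolynomial.C (v j))^m := by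
          rw [hd]
          apply Finset.sum_congr rfl
          intro m _
          rw [← MvPolynomial.C_pow, MvPolynomial.smul_eq_C_mul]
          unfold Fk
          ring
      _ = linform (v j)^n := this.symm
  have hrepr : Fv ⟨k, by omega⟩ = ∑ j : Fin d, (V⁻¹ ⟨k, by omega⟩ j) • (linform (v j))^n := by
    calc Fv ⟨k, by omega⟩
        = ∑ l : Fin d, ((V⁻¹ * V) ⟨k, by omega⟩ l) • Fv l := by
          rw [hWV]
          rw [Finset.sum_eq_single_of_mem (⟨k, by omega⟩ : Fin d) (Finset.mem_univ _)]
          · simp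
          · intro l _ hl
            rw [Matrix.one_apply_ne (Ne.symm hl), zero_smul]
      _ = ∑ l : Fin d, ∑ j : Fin d, (V⁻¹ ⟨k, by omega⟩ j * V j l) • Fv l := by
          apply Finset.sum_congr rfl
          intro l _
          rw [Matrix.mul_apply, Finset.sum_smul]
      _ = ∑ j : Fin d, ∑ l : Fin d, (V⁻¹ ⟨k, by omega⟩ j) • (V j l • Fv l) := by
          rw [Finset.sum_comm]
          apply Finset.sum_congr rfl; intro j _
          apply Finset.sum_congr rfl; intro l _
          rw [smul_smul]
      _ = ∑ j : Fin d, (V⁻¹ ⟨k, by omega⟩ j) • (linform (v j))^n := by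
          apply Finset.sum_congr rfl; intro j _
          rw [← Finset.smul_sum, heq j]
  have : Fk n k = Fv ⟨k, by omega⟩ := rfl
  rw [this, hrepr]
  apply Submodule.sum_mem
  intro j _
  apply Submodule.smul_mem
  apply Submodule.subset_span
  exact ⟨v j, rfl⟩

-- ## real/imaginary decomposition
noncomputable def mapR : R3R →+* R3C := MvPolynomial.map Complex.ofRealHom

noncomputable def reP (f : R3C) : R3R :=
  ∑ d ∈ f.support, monomial d ((f.coeff d).re)
noncomputable def imP (f : R3C) : R3R :=
  ∑ d ∈ f.support, monomial d ((f.coeff d).im)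

lemma coeff_reP (f : R3C) (d : Fin 3 →₀ ℕ) : (reP f).coeff d = (f.coeff d).re := by
  unfold reP
  rw [MvPolynomial.coeff_sum]
  simp only [MvPolynomial.coeff_monomial]
  rw [Finset.sum_ite_eq' f.support d (fun d' => (f.coeff d').re)]
  split
  · rfl
  · next h => rw [MvPolynomial.notMem_support_iff.1 h, Complex.zero_re]

lemma coeff_imP (f : R3C) (d : Fin 3 →₀ ℕ) : (imP f).coeff d = (f.coeff d).im := by
  unfold imP
  rw [MvPolynomial.coeff_sum]
  simp only [MvPolynomial.coeff_monomial]
  rw [Finset.sum_ite_eq' f.support d (fun d' => (f.coeff d').im)]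
  split
  · rfl
  · next h => rw [MvPolynomial.notMem_support_iff.1 h, Complex.zero_im]

lemma decompose (f : R3C) :
    f = mapR (reP f) + MvPolynomial.C Complex.I * mapR (imP f) := by
  apply MvPolynomial.ext
  intro d
  rw [MvPolynomial.coeff_add, MvPolynomial.coeff_C_mul]
  unfold mapR
  rw [MvPolynomial.coeff_map, MvPolynomial.coeff_map, coeff_reP, coeff_imP]
  rw [show (Complex.ofRealHom ((f.coeff d).re) : ℂ) = ((f.coeff d).re : ℂ) from rfl,
    show (Complex.ofRealHom ((f.coeff d).im) : ℂ) = ((f.coeff d).im : ℂ) from rfl]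
  rw [mul_comm]
  exact (Complex.re_add_im _).symm

lemma unique0 (g h : R3R) (hgh : mapR g + MvPolynomial.C Complex.I * mapR h = 0) :
    g = 0 ∧ h = 0 := by
  have key : ∀ d : Fin 3 →₀ ℕ, g.coeff d = 0 ∧ h.coeff d = 0 := by
    intro d
    have := congrArg (MvPolynomial.coeff d) hgh
    rw [MvPolynomial.coeff_add, MvPolynomial.coeff_C_mul] at this
    unfold mapR at this
    rw [MvPolynomial.coeff_map, MvPolynomial.coeff_map, MvPolynomial.coeff_zero] at this
    constructor
    · have h1 := congrArg Complex.re this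
      simpa using h1
    · have h2 := congrArg Complex.im this
      simpa using h2
  exact ⟨MvPolynomial.ext _ _ fun d => by rw [(key d).1, MvPolynomial.coeff_zero],
    MvPolynomial.ext _ _ fun d => by rw [(key d).2, MvPolynomial.coeff_zero]⟩

lemma uniqueEq (u v u' v' : R3R)
    (h : mapR u + MvPolynomial.C Complex.I * mapR v
       = mapR u' + MvPolynomial.C Complex.I * mapR v') : u = u' ∧ v = v' := by
  have h0 : mapR (u - u') + MvPolynomial.C Complex.I * mapR (v - v') = 0 := by
    rw [map_sub, map_sub]
    linear_combination h
  obtain ⟨h1, h2⟩ := unique0 _ _ h0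
  exact ⟨sub_eq_zero.1 h1, sub_eq_zero.1 h2⟩

lemma lapC_mapR (g : R3R) : lapC (mapR g) = mapR (lap g) := by
  unfold lapC lap mapR
  simp only [MvPolynomial.pderiv_map, map_add]

lemma lapC_add (f g : R3C) : lapC (f + g) = lapC f + lapC g := by
  unfold lapC
  simp only [map_add]
  ring

lemma lapC_C_mul (a : ℂ) (f : R3C) : lapC (MvPolynomial.C a * f) = MvPolynomial.C a * lapC f := by
  unfold lapC
  simp only [pderiv_C_mul]
  ring

lemma reP_hom {f : R3C} {n : ℕ} (hf : f.IsHomogeneous n) : (reP f).IsHomogeneous n := by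
  intro d hd
  refine hf ?_
  intro hc
  rw [coeff_reP, hc, Complex.zero_re] at hd
  exact hd rfl

lemma imP_hom {f : R3C} {n : ℕ} (hf : f.IsHomogeneous n) : (imP f).IsHomogeneous n := by
  intro d hd
  refine hf ?_
  intro hc
  rw [coeff_imP, hc, Complex.zero_im] at hd
  exact hd rfl

noncomputable def lapCL : R3C →ₗ[ℂ] R3C :=
  ((pderiv 0 : Derivation ℂ R3C R3C).toLinearMap.comp (pderiv 0 : Derivation ℂ R3C R3C).toLinearMap)
  + ((pderiv 1 : Derivation ℂ R3C R3C).toLinearMap.comp (pderiv 1 : Derivation ℂ R3C R3C).toLinearMap)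
  + ((pderiv 2 : Derivation ℂ R3C R3C).toLinearMap.comp (pderiv 2 : Derivation ℂ R3C R3C).toLinearMap)

lemma lapCL_apply (f : R3C) : lapCL f = lapC f := rfl

lemma Fk_good (n k : ℕ) (hk : k ≤ 2*n) :
    (Fk n k).IsHomogeneous n ∧ lapC (Fk n k) = 0 := by
  have hmem := Fk_mem_span n k hk
  have hle : Submodule.span ℂ {g : R3C | ∃ t : ℂ, g = (linform t)^n}
      ≤ (homogeneousSubmodule (Fin 3) ℂ n) ⊓ (LinearMap.ker lapCL) := by
    rw [Submodule.span_le]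
    rintro g ⟨t, rfl⟩
    constructor
    · exact (mem_homogeneousSubmodule _ _).2 (linform_hom t n)
    · rw [SetLike.mem_coe, LinearMap.mem_ker, lapCL_apply, lap_linform_pow]
  have := hle hmem
  exact ⟨(mem_homogeneousSubmodule _ _).1 this.1,
    by rw [← lapCL_apply]; exact LinearMap.mem_ker.1 this.2⟩


lemma hii_lemma : (MvPolynomial.C Complex.I : R3C) * MvPolynomial.C Complex.I = -1 := by
  rw [← MvPolynomial.C_mul, Complex.I_mul_I, map_neg, MvPolynomial.C_1]

lemma decompose_mul (f g : R3C) :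
    f * g = mapR (reP f * reP g - imP f * imP g)
      + MvPolynomial.C Complex.I * mapR (reP f * imP g + imP f * reP g) := by
  conv_lhs => rw [decompose f, decompose g]
  rw [map_sub, map_add, map_mul, map_mul, map_mul, map_mul]
  linear_combination (mapR (imP f) * mapR (imP g)) * hii_lemma

lemma hconst (c : ℝ) : (MvPolynomial.C ((c : ℂ)) : R3C) = mapR (MvPolynomial.C c) := by
  unfold mapR
  rw [MvPolynomial.map_C]
  rfl

lemma mapR_C_mul (c : ℝ) (x : R3R) :
    mapR (MvPolynomial.C c * x) = MvPolynomial.C ((c : ℂ)) * mapR x := by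
  rw [map_mul, ← hconst]

lemma mapR_rpow (n : ℕ) :
    mapR ((X 0^2 + X 1^2 + X 2^2 : R3R)^n) = (X 0^2 + X 1^2 + X 2^2 : R3C)^n := by
  unfold mapR
  rw [map_pow, map_add, map_add, map_pow, map_pow, map_pow, MvPolynomial.map_X,
    MvPolynomial.map_X, MvPolynomial.map_X]

/-- If `p₁, …, p_m` is a spanning family of the harmonic homogeneous polynomials of
degree `n`, then `‖x‖^{2n}` is a linear combination of the products `pᵢ·pⱼ`, `i ≤ j`. -/
theorem const_as_quadratic_form (n : ℕ) (hn : 1 ≤ n) (m : ℕ)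
    (p : Fin m → MvPolynomial (Fin 3) ℝ)
    (hhom : ∀ i, (p i).IsHomogeneous n) (hharm : ∀ i, lap (p i) = 0)
    (hspan : ∀ q : MvPolynomial (Fin 3) ℝ, q.IsHomogeneous n → lap q = 0 →
      q ∈ Submodule.span ℝ (Set.range p)) :
    (X 0 ^ 2 + X 1 ^ 2 + X 2 ^ 2 : MvPolynomial (Fin 3) ℝ) ^ n ∈
      Submodule.span ℝ {r : MvPolynomial (Fin 3) ℝ | ∃ i j : Fin m, i ≤ j ∧ r = p i * p j} := by
  classical
  set T := Submodule.span ℝ {r : MvPolynomial (Fin 3) ℝ | ∃ i j : Fin m, i ≤ j ∧ r = p i * p j}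
    with hT
  -- products of span elements lie in T
  have hmulT : ∀ x y : MvPolynomial (Fin 3) ℝ, x ∈ Submodule.span ℝ (Set.range p) →
      y ∈ Submodule.span ℝ (Set.range p) → x * y ∈ T := by
    intro x y hx hy
    have hxy := Submodule.mul_mem_mul hx hy
    rw [Submodule.span_mul_span] at hxy
    refine Submodule.span_le.2 ?_ hxy
    rintro z hz
    rw [Set.mem_mul] at hz
    obtain ⟨a, ha, b, hb, rfl⟩ := hz
    obtain ⟨i, rfl⟩ := ha
    obtain ⟨j, rfl⟩ := hb
    by_cases hij : i ≤ j
    · exact Submodule.subset_span ⟨i, j, hij, rfl⟩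
    · rw [mul_comm]
      exact Submodule.subset_span ⟨j, i, le_of_not_ge hij, rfl⟩
  -- real and imaginary parts of the Fk lie in the span of the p i
  have hGH : ∀ k, k ≤ 2*n → reP (Fk n k) ∈ Submodule.span ℝ (Set.range p)
      ∧ imP (Fk n k) ∈ Submodule.span ℝ (Set.range p) := by
    intro k hk
    obtain ⟨hhomk, hlapk⟩ := Fk_good n k hk
    have hdec := decompose (Fk n k)
    have hlap0 : mapR (lap (reP (Fk n k)))
        + MvPolynomial.C Complex.I * mapR (lap (imP (Fk n k))) = 0 := by
      rw [← lapC_mapR, ← lapC_mapR, ← lapC_C_mul, ← lapC_add, ← hdec, hlapk]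
    obtain ⟨hg0, hh0⟩ := unique0 _ _ hlap0
    exact ⟨hspan _ (reP_hom hhomk) hg0, hspan _ (imP_hom hhomk) hh0⟩
  -- extract the real identity from the master identity
  have hmaster := master n hn
  have hLHS : ∑ k ∈ Finset.range (2*n+1),
      MvPolynomial.C ((-1:ℂ)^k * ((k.factorial : ℂ) * ((2*n - k).factorial : ℂ)))
        * (Fk n k * Fk n (2*n - k))
      = mapR (∑ k ∈ Finset.range (2*n+1),
          MvPolynomial.C ((-1:ℝ)^k * ((k.factorial : ℝ) * ((2*n - k).factorial : ℝ))) *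
            (reP (Fk n k) * reP (Fk n (2*n-k)) - imP (Fk n k) * imP (Fk n (2*n-k))))
        + MvPolynomial.C Complex.I * mapR (∑ k ∈ Finset.range (2*n+1),
          MvPolynomial.C ((-1:ℝ)^k * ((k.factorial : ℝ) * ((2*n - k).factorial : ℝ))) *
            (reP (Fk n k) * imP (Fk n (2*n-k)) + imP (Fk n k) * reP (Fk n (2*n-k)))) := by
    rw [map_sum, map_sum, Finset.mul_sum, ← Finset.sum_add_distrib]
    apply Finset.sum_congr rfl
    intro k _
    rw [decompose_mul (Fk n k) (Fk n (2*n-k))]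
    rw [mapR_C_mul, mapR_C_mul]
    rw [show ((-1:ℂ)^k * ((k.factorial : ℂ) * ((2*n - k).factorial : ℂ)))
      = (((-1:ℝ)^k * ((k.factorial : ℝ) * ((2*n - k).factorial : ℝ)) : ℝ) : ℂ) from by push_cast; ring]
    ring
  have hRHS : (MvPolynomial.C ((-1:ℂ)^n * ((n.factorial : ℂ))^2 * 4^n) : R3C)
        * (X 0^2 + X 1^2 + X 2^2)^n
      = mapR (MvPolynomial.C ((-1:ℝ)^n * ((n.factorial : ℝ))^2 * 4^n)
        * (X 0^2 + X 1^2 + X 2^2)^n)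
        + MvPolynomial.C Complex.I * mapR 0 := by
    rw [map_zero, mul_zero, add_zero]
    rw [mapR_C_mul, mapR_rpow]
    rw [show ((-1:ℂ)^n * ((n.factorial : ℂ))^2 * 4^n)
      = (((-1:ℝ)^n * ((n.factorial : ℝ))^2 * 4^n : ℝ) : ℂ) from by push_cast; ring]
  rw [hLHS, hRHS] at hmaster
  obtain ⟨hreal, -⟩ := uniqueEq _ _ _ _ hmaster
  -- conclude
  have hcrh : ((-1:ℝ)^n * ((n.factorial : ℝ))^2 * 4^n) ≠ 0 := by
    apply mul_ne_zero
    apply mul_ne_zero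
    · exact pow_ne_zero _ (by norm_num)
    · exact pow_ne_zero _ (Nat.cast_ne_zero.2 (Nat.factorial_ne_zero _))
    · exact pow_ne_zero _ (by norm_num)
  have hfin : (X 0 ^ 2 + X 1 ^ 2 + X 2 ^ 2 : MvPolynomial (Fin 3) ℝ) ^ n
      = MvPolynomial.C (((-1:ℝ)^n * ((n.factorial : ℝ))^2 * 4^n)⁻¹)
        * ∑ k ∈ Finset.range (2*n+1),
          MvPolynomial.C ((-1:ℝ)^k * ((k.factorial : ℝ) * ((2*n - k).factorial : ℝ))) *
            (reP (Fk n k) * reP (Fk n (2*n-k)) - imP (Fk n k) * imP (Fk n (2*n-k))) := by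
    rw [hreal, ← mul_assoc, ← MvPolynomial.C_mul, inv_mul_cancel₀ hcrh, MvPolynomial.C_1, one_mul]
  rw [hfin, ← MvPolynomial.smul_eq_C_mul]
  apply T.smul_mem
  apply T.sum_mem
  intro k hk
  have hk' : k ≤ 2*n := by have := Finset.mem_range.1 hk; omega
  have hk2 : 2*n - k ≤ 2*n := by omega
  rw [← MvPolynomial.smul_eq_C_mul]
  apply T.smul_mem
  exact T.sub_mem
    (hmulT _ _ (hGH k hk').1 (hGH (2*n-k) hk2).1)
    (hmulT _ _ (hGH k hk').2 (hGH (2*n-k) hk2).2)
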